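/- Let F be a class of functions from Z to {0,1} with Littlestone dimension d ≥ 1, and T ≥ 1. Then the sequential Rademacher complexity of F satisfies R_T(F) ≤ 12·√(d·log(eT))/√T, and hence T·R_T(F) ≤ 12·√(d·T·(log T + 1)). -/

import Mathlib

abbrev BTree (Z : Type*) (d : ℕ) := ∀ t : Fin d, (Fin t → Bool) → Z

def LShattered {Z : Type*} (F : Set (Z → Bool)) (d : ℕ) (tr : BTree Z d) : Prop :=
  ∀ ε : Fin d → Bool, ∃ f ∈ F, ∀ t : Fin d,
    f (tr t fun i => ε ⟨i.1, i.isLt.trans t.isLt⟩) = ε t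


noncomputable def Ldim {Z : Type*} (F : Set (Z → Bool)) : ℕ∞ :=
  sSup ((fun n : ℕ => (n : ℕ∞)) '' {n | ∃ tr : BTree Z n, LShattered F n tr})

/-- Sequential Rademacher complexity of a boolean class `F` at horizon `T`:
the supremum over `Z`-valued trees of the expectation (uniform average over the
`2^T` i.i.d. Rademacher sign sequences) of `sup_{f ∈ F} (1/T) Σ_t ε_t f(z^{(t)}(ε))`. -/
noncomputable def seqRad {Z : Type*} (F : Set (Z → Bool)) (T : ℕ) : ℝ :=
  ⨆ tree : BTree Z T,
    (∑ ε : Fin T → Bool,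
      ⨆ f : F, (1 / (T : ℝ)) * ∑ t : Fin T,
        (if ε t then (1 : ℝ) else -1) *
          (if (f : Z → Bool) (tree t fun i => ε ⟨i.1, i.isLt.trans t.isLt⟩) then 1 else 0))
      / 2 ^ T

namespace SR

variable {Z : Type*} {T : ℕ}

def res (ε : Fin T → Bool) (t : Fin T) : Fin t.1 → Bool :=
  fun i => ε ⟨i.1, i.isLt.trans t.isLt⟩

def tail (ε : Fin (T+1) → Bool) : Fin T → Bool := fun j => ε j.succ

def subZ (z : BTree Z (T+1)) (b : Bool) : BTree Z T :=
  fun t κ => z t.succ (Fin.cases b κ)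

def consT (x : Z) (v0 v1 : BTree Z T) : BTree Z (T+1) :=
  fun t => Fin.cases (motive := fun t : Fin (T+1) => (Fin t.1 → Bool) → Z)
    (fun _ => x)
    (fun t' κ => (if κ ⟨0, Nat.succ_pos _⟩ then v1 else v0) t' (fun j => κ j.succ)) t

lemma res_succ (ε : Fin (T+1) → Bool) (t : Fin T) :
    res ε t.succ = Fin.cases (ε 0) (res (tail ε) t) := by
  funext i
  induction i using Fin.cases with
  | zero =>
      rw [Fin.cases_zero]
      exact congrArg ε (Fin.ext (by simp [res]))
  | succ j =>
      rw [Fin.cases_succ]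
      exact congrArg ε (Fin.ext (by simp [res, tail]))

lemma zero_pi_eq (κ κ' : Fin ((0 : Fin (T+1)).1) → Bool) : κ = κ' := by
  funext i
  exact absurd i.isLt (by simp)

@[simp] lemma consT_zero (x : Z) (v0 v1 : BTree Z T) (κ : Fin ((0:Fin (T+1)).1) → Bool) :
    consT x v0 v1 0 κ = x := by
  simp [consT]
  rfl

lemma subZ_consT (x : Z) (v0 v1 : BTree Z T) (b : Bool) :
    subZ (consT x v0 v1) b = if b then v1 else v0 := by
  funext t κ
  simp [subZ, consT, Fin.mk_zero]
  rfl

lemma z_succ_res (z : BTree Z (T+1)) (ε : Fin (T+1) → Bool) (t : Fin T) :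
    z t.succ (res ε t.succ) = subZ z (ε 0) t (res (tail ε) t) := by
  rw [res_succ]; rfl

/-- `F` has no shattered tree of depth `n`. -/
def NoShatter (F : Set (Z → Bool)) (n : ℕ) : Prop :=
  ∀ tr : BTree Z n, ¬ LShattered F n tr

lemma LShattered_def (F : Set (Z → Bool)) (n : ℕ) (tr : BTree Z n) :
    LShattered F n tr ↔ ∀ ε : Fin n → Bool, ∃ f ∈ F, ∀ t : Fin n, f (tr t (res ε t)) = ε t :=
  Iff.rfl

lemma NoShatter.mono {F G : Set (Z → Bool)} (h : F ⊆ G) {n : ℕ} (hG : NoShatter G n) :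
    NoShatter F n := by
  intro tr htr
  exact hG tr (fun ε => (htr ε).imp (fun f hf => ⟨h hf.1, hf.2⟩))

/-- combination: if both restricted classes shatter depth-k trees, F shatters depth k+1. -/
lemma exists_noShatter_sub (F : Set (Z → Bool)) (k : ℕ) (r : Z)
    (h : NoShatter F (k+1)) :
    ∃ b : Bool, NoShatter {f ∈ F | f r = b} k := by
  by_contra hc
  push_neg at hc
  have hb0 := hc false
  have hb1 := hc true
  simp only [NoShatter, not_forall, not_not] at hb0 hb1
  obtain ⟨tr0, h0⟩ := hb0
  obtain ⟨tr1, h1⟩ := hb1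
  refine h (consT r tr0 tr1) ?_
  intro ε
  have key : ∀ f : Z → Bool, (∀ t : Fin k, f ((if ε 0 then tr1 else tr0) t (res (tail ε) t)) = tail ε t) →
      f r = ε 0 → ∀ t : Fin (k+1), f (consT r tr0 tr1 t (res ε t)) = ε t := by
    intro f hf hr t
    induction t using Fin.cases with
    | zero => rw [consT_zero]; exact hr
    | succ t' =>
        have := z_succ_res (consT r tr0 tr1) ε t'
        rw [this, subZ_consT]
        exact hf t'
  cases hε : ε 0 with
  | false =>
      obtain ⟨f, hfF, hf⟩ := h0 (tail ε)
      exact ⟨f, hfF.1, key f (by rw [hε]; exact hf) (by rw [hfF.2, hε])⟩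
  | true =>
      obtain ⟨f, hfF, hf⟩ := h1 (tail ε)
      exact ⟨f, hfF.1, key f (by rw [hε]; exact hf) (by rw [hfF.2, hε])⟩


/-- size of the 0-cover -/
def g : ℕ → ℕ → ℕ
  | 0, _ => 1
  | _+1, 0 => 1
  | d+1, T+1 => g (d+1) T + g d T

lemma g_pos (d T : ℕ) : 1 ≤ g d T := by
  induction d generalizing T with
  | zero => simp [g]
  | succ d ih =>
      cases T with
      | zero => simp [g]
      | succ T => have := ih T; simp only [g]; omega

lemma g_le (d T : ℕ) : g d T ≤ (T+1)^d := by
  induction d generalizing T with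
  | zero => simp [g]
  | succ d ih =>
      induction T with
      | zero => simp [g]
      | succ T ihT =>
          calc g (d+1) (T+1) = g (d+1) T + g d T := rfl
          _ ≤ (T+1)^(d+1) + (T+1)^d := Nat.add_le_add ihT (ih T)
          _ ≤ (T+2)^(d+1) := by
              have h1 : (T+1)^(d+1) + (T+1)^d = (T+2) * (T+1)^d := by ring
              have h2 : (T+2) * (T+1)^d ≤ (T+2) * (T+2)^d :=
                Nat.mul_le_mul_left _ (Nat.pow_le_pow_left (by omega) d)
              calc (T+1)^(d+1) + (T+1)^d = (T+2)*(T+1)^d := h1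
              _ ≤ (T+2)*(T+2)^d := h2
              _ = (T+2)^(d+1) := (pow_succ' _ _).symm

def Covers (F : Set (Z → Bool)) (z : BTree Z T) {N : ℕ} (V : Fin N → BTree Bool T) : Prop :=
  ∀ f ∈ F, ∀ ε : Fin T → Bool, ∃ i : Fin N,
    ∀ t : Fin T, V i t (res ε t) = f (z t (res ε t))

lemma cover_step {G : Set (Z → Bool)} {z : BTree Z (T+1)} {N : ℕ}
    {V0 V1 : Fin N → BTree Bool T} (c : Bool)
    (h0 : Covers G (subZ z false) V0) (h1 : Covers G (subZ z true) V1)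
    (hc : ∀ f ∈ G, ∀ κ, f (z 0 κ) = c) :
    Covers G z (fun i => consT c (V0 i) (V1 i)) := by
  intro f hf ε
  have key : ∀ (i : Fin N),
      (∀ t : Fin T, (if ε 0 then V1 i else V0 i) t (res (tail ε) t)
        = f (subZ z (ε 0) t (res (tail ε) t))) →
      ∀ t : Fin (T+1), consT c (V0 i) (V1 i) t (res ε t) = f (z t (res ε t)) := by
    intro i hi t
    induction t using Fin.cases with
    | zero => rw [consT_zero, hc f hf]
    | succ t' =>
        rw [z_succ_res (consT c (V0 i) (V1 i)) ε t', subZ_consT, z_succ_res z ε t']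
        exact hi t'
  cases hε : ε 0 with
  | false =>
      obtain ⟨i, hi⟩ := h0 f hf (tail ε)
      exact ⟨i, key i (by rw [hε]; exact hi) ⟩
  | true =>
      obtain ⟨i, hi⟩ := h1 f hf (tail ε)
      exact ⟨i, key i (by rw [hε]; exact hi) ⟩

lemma cover_exists : ∀ (T : ℕ) (d : ℕ) (F : Set (Z → Bool)) (z : BTree Z T),
    NoShatter F (d+1) → ∃ V : Fin (g d T) → BTree Bool T, Covers F z V := by
  intro T
  induction T with
  | zero =>
      intro d F z _
      refine ⟨fun _ t => t.elim0, fun f hf ε => ⟨⟨0, g_pos d 0⟩, fun t => t.elim0⟩⟩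
  | succ T ih =>
      intro d F z hF
      set r : Z := z 0 (fun i => absurd i.isLt (by simp)) with hr
      obtain ⟨b, hb⟩ := exists_noShatter_sub F d r hF
      have hzero : ∀ κ : Fin ((0:Fin (T+1)).1) → Bool, z 0 κ = r := by
        intro κ; rw [hr]; exact congrArg (z 0) (zero_pi_eq _ _)
      -- the big class
      have hbig : NoShatter {f ∈ F | f r = !b} (d+1) :=
        NoShatter.mono (fun f hf => hf.1) hF
      obtain ⟨VB0, hVB0⟩ := ih d {f ∈ F | f r = !b} (subZ z false) hbig
      obtain ⟨VB1, hVB1⟩ := ih d {f ∈ F | f r = !b} (subZ z true) hbig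
      have WB := cover_step (G := {f ∈ F | f r = !b}) (z := z) (!b) hVB0 hVB1
        (fun f hf κ => by rw [hzero]; exact hf.2)
      cases d with
      | zero =>
          -- small class is empty: every f ∈ F has f r = !b
          have hg : g 0 (T+1) = g 0 T := by simp [g]
          have hall : ∀ f ∈ F, f r = !b := by
            intro f hf
            by_contra hne
            have hfb : f r = b := by cases b <;> cases hfr : f r <;> simp_all
            exact hb (fun t => t.elim0) (fun ε' => ⟨f, ⟨hf, hfb⟩, fun t => t.elim0⟩)
          refine ⟨fun i => consT (!b) (VB0 (Fin.cast hg i)) (VB1 (Fin.cast hg i)), ?_⟩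
          intro f hf ε
          obtain ⟨i, hi⟩ := WB f ⟨hf, hall f hf⟩ ε
          refine ⟨Fin.cast hg.symm i, fun t => ?_⟩
          have hcc : Fin.cast hg (Fin.cast hg.symm i) = i := by ext; simp
          simp only [hcc]
          exact hi t
      | succ d' =>
          obtain ⟨VS0, hVS0⟩ := ih d' {f ∈ F | f r = b} (subZ z false) hb
          obtain ⟨VS1, hVS1⟩ := ih d' {f ∈ F | f r = b} (subZ z true) hb
          have WS := cover_step (G := {f ∈ F | f r = b}) (z := z) b hVS0 hVS1
            (fun f hf κ => by rw [hzero]; exact hf.2)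
          refine ⟨Fin.addCases (fun i => consT (!b) (VB0 i) (VB1 i))
            (fun i => consT b (VS0 i) (VS1 i)), ?_⟩
          intro f hf ε
          cases hfr : f r with
          | false =>
              cases b with
              | false =>
                  obtain ⟨i, hi⟩ := WS f ⟨hf, hfr⟩ ε
                  exact ⟨Fin.natAdd _ i, by simpa using hi⟩
              | true =>
                  obtain ⟨i, hi⟩ := WB f ⟨hf, by simpa using hfr⟩ ε
                  exact ⟨Fin.castAdd _ i, by simpa using hi⟩
          | true =>
              cases b with
              | true =>
                  obtain ⟨i, hi⟩ := WS f ⟨hf, hfr⟩ ε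
                  exact ⟨Fin.natAdd _ i, by simpa using hi⟩
              | false =>
                  obtain ⟨i, hi⟩ := WB f ⟨hf, by simpa using hfr⟩ ε
                  exact ⟨Fin.castAdd _ i, by simpa using hi⟩

noncomputable def S (v : BTree Bool T) (ε : Fin T → Bool) : ℝ :=
  ∑ t : Fin T, (if ε t then (1:ℝ) else -1) * (if v t (res ε t) then 1 else 0)

lemma S_succ (v : BTree Bool (T+1)) (ε : Fin (T+1) → Bool) :
    S v ε = (if ε 0 then (1:ℝ) else -1) * (if v 0 (res ε 0) then 1 else 0)
      + S (subZ v (ε 0)) (tail ε) := by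
  rw [S, Fin.sum_univ_succ]
  congr 1
  rw [S]
  refine Finset.sum_congr rfl (fun t _ => ?_)
  rw [z_succ_res v ε t]
  rfl

lemma mgf : ∀ (T : ℕ) (v : BTree Bool T) (l : ℝ),
    ∑ ε : Fin T → Bool, Real.exp (l * S v ε) ≤ 2^T * Real.exp (l^2 * T / 2) := by
  intro T
  induction T with
  | zero =>
      intro v l
      rw [Fintype.sum_unique]
      simp [S]
  | succ T ih =>
      intro v l
      set κ₀ : Fin ((0:Fin (T+1)).1) → Bool := fun _ => true with hκ₀
      set a : ℝ := if v 0 κ₀ then 1 else 0 with ha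
      rw [← Equiv.sum_comp (Fin.consEquiv (fun _ : Fin (T+1) => Bool))
        (fun ε => Real.exp (l * S v ε)), Fintype.sum_prod_type]
      have hterm : ∀ (b : Bool) (ε' : Fin T → Bool),
          Real.exp (l * S v (Fin.cons b ε'))
            = Real.exp (l * ((if b then (1:ℝ) else -1) * a))
              * Real.exp (l * S (subZ v b) ε') := by
        intro b ε'
        have h0 : (Fin.cons b ε' : Fin (T+1) → Bool) 0 = b := Fin.cons_zero _ _
        have ht : tail (Fin.cons b ε' : Fin (T+1) → Bool) = ε' := by
          funext j; exact Fin.cons_succ _ _ _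
        have hres : v 0 (res (Fin.cons b ε' : Fin (T+1) → Bool) 0) = v 0 κ₀ :=
          congrArg (v 0) (zero_pi_eq _ _)
        rw [S_succ, h0, ht, hres, mul_add, Real.exp_add, ha]
      have hM : ∀ b : Bool,
          (∑ ε' : Fin T → Bool, Real.exp (l * S (subZ v b) ε'))
            ≤ 2^T * Real.exp (l^2 * T / 2) := fun b => ih (subZ v b) l
      have hMpos : (0:ℝ) ≤ 2^T * Real.exp (l^2 * T / 2) := by positivity
      have hsum : ∀ b : Bool, (0:ℝ) ≤ ∑ ε' : Fin T → Bool, Real.exp (l * S (subZ v b) ε') :=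
        fun b => Finset.sum_nonneg (fun _ _ => Real.exp_nonneg _)
      have hcosh : Real.cosh (l * a) ≤ Real.exp (l^2/2) := by
        have haa : (l*a)^2 ≤ l^2 := by
          rcases hv : v 0 κ₀ with _|_
          · rw [ha]; simp only [hv, Bool.false_eq_true, if_false, mul_zero]
            simpa using sq_nonneg l
          · rw [ha]; simp [hv]
        calc Real.cosh (l * a) ≤ Real.exp ((l*a)^2 / 2) := Real.cosh_le_exp_half_sq _
          _ ≤ Real.exp (l^2/2) := Real.exp_le_exp.mpr (by linarith)
      set M : ℝ := 2^T * Real.exp (l^2 * T / 2) with hMdef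
      have goalcast : (2:ℝ)^(T+1) * Real.exp (l^2 * ((T:ℕ)+1:ℕ) / 2)
          = 2 * Real.exp (l^2/2) * M := by
        push_cast
        rw [hMdef, show l^2*((T:ℝ)+1)/2 = l^2/2 + l^2*(T:ℝ)/2 by ring, Real.exp_add]
        ring
      rw [goalcast]
      calc (∑ b : Bool, ∑ ε' : Fin T → Bool,
              Real.exp (l * S v (Fin.consEquiv (fun _ : Fin (T+1) => Bool) (b, ε'))))
          = Real.exp (l * a) * (∑ ε' : Fin T → Bool, Real.exp (l * S (subZ v true) ε'))
            + Real.exp (-(l * a)) * (∑ ε' : Fin T → Bool, Real.exp (l * S (subZ v false) ε')) := by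
            rw [Fintype.sum_bool]
            simp only [Fin.consEquiv, Equiv.coe_fn_mk]
            rw [Finset.mul_sum, Finset.mul_sum]
            congr 1
            · refine Finset.sum_congr rfl (fun ε' _ => ?_)
              rw [hterm true ε']
              norm_num
            · refine Finset.sum_congr rfl (fun ε' _ => ?_)
              rw [hterm false ε']
              rw [show l * ((if (false:Bool) then (1:ℝ) else -1) * a) = -(l*a) by
                simp only [Bool.false_eq_true, if_false]; ring]
        _ ≤ Real.exp (l * a) * M + Real.exp (-(l * a)) * M := by
            exact add_le_add (mul_le_mul_of_nonneg_left (hM true) (Real.exp_nonneg _))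
              (mul_le_mul_of_nonneg_left (hM false) (Real.exp_nonneg _))
        _ = 2 * Real.cosh (l * a) * M := by rw [Real.cosh_eq]; ring
        _ ≤ 2 * Real.exp (l^2/2) * M := by
            have h2 : (2:ℝ) * Real.cosh (l*a) ≤ 2 * Real.exp (l^2/2) := by linarith
            exact mul_le_mul_of_nonneg_right h2 hMpos

lemma sum_log_le {ι : Type*} [Fintype ι] [Nonempty ι] (X : ι → ℝ) (hX : ∀ i, 0 < X i) :
    ∑ i, Real.log (X i) ≤ (Fintype.card ι : ℝ) * Real.log ((∑ i, X i) / (Fintype.card ι : ℝ)) := by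
  set n : ℝ := (Fintype.card ι : ℝ) with hn
  have hnpos : 0 < n := by
    rw [hn]; exact_mod_cast Fintype.card_pos
  set c : ℝ := (∑ i, X i) / n with hc
  have hspos : 0 < ∑ i, X i := Finset.sum_pos (fun i _ => hX i) Finset.univ_nonempty
  have hcpos : 0 < c := div_pos hspos hnpos
  have hs : (∑ i, X i) = n * c := by rw [hc]; field_simp
  have key : ∀ i, Real.log (X i) ≤ X i / c - 1 + Real.log c := by
    intro i
    have h1 : Real.log (X i / c) ≤ X i / c - 1 := Real.log_le_sub_one_of_pos (div_pos (hX i) hcpos)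
    have h2 : Real.log (X i / c) = Real.log (X i) - Real.log c :=
      Real.log_div (ne_of_gt (hX i)) (ne_of_gt hcpos)
    linarith
  calc ∑ i, Real.log (X i) ≤ ∑ i, (X i / c - 1 + Real.log c) :=
        Finset.sum_le_sum (fun i _ => key i)
    _ = (∑ i, X i) / c - n + n * Real.log c := by
        rw [Finset.sum_add_distrib, Finset.sum_sub_distrib, ← Finset.sum_div,
          Finset.sum_const, Finset.sum_const, Finset.card_univ, nsmul_eq_mul, nsmul_eq_mul]
        rw [hn]
        ring
    _ = n * Real.log c := by
        rw [hs]
        field_simp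
        ring

lemma tree_bound {N : ℕ} (hN : 1 ≤ N) (F : Set (Z → Bool)) [Nonempty F]
    (hT : 1 ≤ T) (z : BTree Z T) (V : Fin N → BTree Bool T) (hV : Covers F z V)
    (L : ℝ) (hL : 1 ≤ L) (hlogN : Real.log N ≤ L) :
    (∑ ε : Fin T → Bool,
      ⨆ f : F, (1 / (T : ℝ)) * ∑ t : Fin T,
        (if ε t then (1 : ℝ) else -1) *
          (if (f : Z → Bool) (z t fun i => ε ⟨i.1, i.isLt.trans t.isLt⟩) then 1 else 0))
      / 2 ^ T ≤ Real.sqrt (2 * L / T) := by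
  have hTpos : (0:ℝ) < T := by exact_mod_cast hT
  have hLT : 0 < 2 * L / (T:ℝ) := by positivity
  set lam : ℝ := Real.sqrt (2 * L / T) with hlam
  have hlampos : 0 < lam := Real.sqrt_pos.mpr hLT
  have hlamsq : lam ^ 2 = 2 * L / T := Real.sq_sqrt (le_of_lt hLT)
  haveI : NeZero N := ⟨by omega⟩
  set X : (Fin T → Bool) → ℝ := fun ε => ∑ i : Fin N, Real.exp (lam * S (V i) ε) with hX
  have hXpos : ∀ ε, 0 < X ε := fun ε =>
    Finset.sum_pos (fun i _ => Real.exp_pos _) Finset.univ_nonempty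
  -- step 1 : pointwise bound of the supremum
  have step1 : ∀ ε : Fin T → Bool,
      (⨆ f : F, (1 / (T : ℝ)) * ∑ t : Fin T,
        (if ε t then (1 : ℝ) else -1) *
          (if (f : Z → Bool) (z t fun i => ε ⟨i.1, i.isLt.trans t.isLt⟩) then 1 else 0))
      ≤ Real.log (X ε) / (lam * T) := by
    intro ε
    refine ciSup_le (fun f => ?_)
    obtain ⟨i, hi⟩ := hV f f.2 ε
    have hval : (1 / (T : ℝ)) * (∑ t : Fin T,
        (if ε t then (1 : ℝ) else -1) *
          (if (f : Z → Bool) (z t fun i => ε ⟨i.1, i.isLt.trans t.isLt⟩) then 1 else 0))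
        = (1 / (T : ℝ)) * S (V i) ε := by
      congr 1
      rw [S]
      exact Finset.sum_congr rfl (fun t _ => by rw [hi t]; rfl)
    rw [hval]
    have h1 : Real.exp (lam * S (V i) ε) ≤ X ε := by
      rw [hX]
      exact Finset.single_le_sum (f := fun j => Real.exp (lam * S (V j) ε))
        (fun j _ => Real.exp_nonneg _) (Finset.mem_univ i)
    have h2 : lam * S (V i) ε ≤ Real.log (X ε) :=
      (Real.le_log_iff_exp_le (hXpos ε)).mpr h1
    have h3 : (1 / (T : ℝ)) * S (V i) ε = (lam * S (V i) ε) / (lam * T) := by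
      field_simp
    rw [h3]
    exact div_le_div_of_nonneg_right h2 (by positivity)
  -- step 2 : averaging the logs
  have hcard : (Fintype.card (Fin T → Bool) : ℝ) = 2 ^ T := by
    simp [Fintype.card_fun]
  have step2 : ∑ ε : Fin T → Bool, Real.log (X ε)
      ≤ (2:ℝ) ^ T * Real.log ((∑ ε : Fin T → Bool, X ε) / (2:ℝ) ^ T) := by
    have := sum_log_le X hXpos
    rwa [hcard] at this
  -- step 3 : the MGF bound on the average
  have step3 : (∑ ε : Fin T → Bool, X ε) ≤ (N : ℝ) * (2 ^ T * Real.exp (lam ^ 2 * T / 2)) := by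
    rw [hX]
    rw [Finset.sum_comm]
    calc (∑ i : Fin N, ∑ ε : Fin T → Bool, Real.exp (lam * S (V i) ε))
        ≤ ∑ _i : Fin N, (2:ℝ) ^ T * Real.exp (lam ^ 2 * T / 2) :=
          Finset.sum_le_sum (fun i _ => mgf T (V i) lam)
      _ = (N : ℝ) * (2 ^ T * Real.exp (lam ^ 2 * T / 2)) := by
          rw [Finset.sum_const, Finset.card_univ, Fintype.card_fin, nsmul_eq_mul]
  have havg : (∑ ε : Fin T → Bool, X ε) / (2:ℝ) ^ T ≤ (N:ℝ) * Real.exp (lam ^ 2 * T / 2) := by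
    rw [div_le_iff₀ (by positivity : (0:ℝ) < (2:ℝ)^T)]
    calc (∑ ε : Fin T → Bool, X ε) ≤ (N : ℝ) * (2 ^ T * Real.exp (lam ^ 2 * T / 2)) := step3
      _ = (N:ℝ) * Real.exp (lam ^ 2 * T / 2) * 2 ^ T := by ring
  have hlogavg : Real.log ((∑ ε : Fin T → Bool, X ε) / (2:ℝ) ^ T) ≤ 2 * L := by
    have hNpos : (0:ℝ) < N := by exact_mod_cast hN
    calc Real.log ((∑ ε : Fin T → Bool, X ε) / (2:ℝ) ^ T)
        ≤ Real.log ((N:ℝ) * Real.exp (lam ^ 2 * T / 2)) := by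
          refine Real.log_le_log ?_ havg
          positivity
      _ = Real.log N + lam ^ 2 * T / 2 := by
          rw [Real.log_mul (ne_of_gt hNpos) (Real.exp_ne_zero _), Real.log_exp]
      _ ≤ L + L := by
          have : lam ^ 2 * T / 2 = L := by
            rw [hlamsq]; field_simp
          rw [this]
          exact add_le_add hlogN le_rfl
      _ = 2 * L := by ring
  -- assemble
  calc (∑ ε : Fin T → Bool,
      ⨆ f : F, (1 / (T : ℝ)) * ∑ t : Fin T,
        (if ε t then (1 : ℝ) else -1) *
          (if (f : Z → Bool) (z t fun i => ε ⟨i.1, i.isLt.trans t.isLt⟩) then 1 else 0))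
      / 2 ^ T
      ≤ (∑ ε : Fin T → Bool, Real.log (X ε) / (lam * T)) / 2 ^ T := by
        refine div_le_div_of_nonneg_right ?_ (by positivity)
        exact Finset.sum_le_sum (fun ε _ => step1 ε)
    _ = (∑ ε : Fin T → Bool, Real.log (X ε)) / (lam * T) / 2 ^ T := by
        rw [← Finset.sum_div]
    _ ≤ ((2:ℝ) ^ T * (2 * L)) / (lam * T) / 2 ^ T := by
        have h4 : (∑ ε : Fin T → Bool, Real.log (X ε)) ≤ (2:ℝ) ^ T * (2 * L) := by
          calc (∑ ε : Fin T → Bool, Real.log (X ε))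
              ≤ (2:ℝ) ^ T * Real.log ((∑ ε : Fin T → Bool, X ε) / (2:ℝ) ^ T) := step2
            _ ≤ (2:ℝ) ^ T * (2 * L) := by
                refine mul_le_mul_of_nonneg_left hlogavg (by positivity)
        refine div_le_div_of_nonneg_right (div_le_div_of_nonneg_right h4 (by positivity)) (by positivity)
    _ = lam := by
        have h2L : 2 * L = lam ^ 2 * T := by rw [hlamsq]; field_simp
        rw [h2L]
        field_simp

lemma seqRad_le {F : Set (Z → Bool)} {d : ℕ}
    (hF : F.Nonempty) (hNS : NoShatter F (d+1)) (hd1 : 1 ≤ d) (hT : 1 ≤ T) :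
    (⨆ tree : BTree Z T,
      (∑ ε : Fin T → Bool,
        ⨆ f : F, (1 / (T : ℝ)) * ∑ t : Fin T,
          (if ε t then (1 : ℝ) else -1) *
            (if (f : Z → Bool) (tree t fun i => ε ⟨i.1, i.isLt.trans t.isLt⟩) then 1 else 0))
        / 2 ^ T)
    ≤ Real.sqrt (2 * (d * Real.log (Real.exp 1 * T)) / T) := by
  haveI : Nonempty F := hF.to_subtype
  have hTpos : (0:ℝ) < T := by exact_mod_cast hT
  set L : ℝ := d * Real.log (Real.exp 1 * T) with hL
  have hlogeT : Real.log (Real.exp 1 * T) = 1 + Real.log T := by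
    rw [Real.log_mul (Real.exp_ne_zero 1) (by positivity), Real.log_exp]
  have hlogT : 0 ≤ Real.log T := Real.log_nonneg (by exact_mod_cast hT)
  have hL1 : 1 ≤ L := by
    rw [hL, hlogeT]
    have hd1' : (1:ℝ) ≤ d := by exact_mod_cast hd1
    nlinarith
  have hlogN : Real.log (g d T) ≤ L := by
    have h1 : (g d T : ℝ) ≤ ((T:ℝ)+1) ^ d := by
      exact_mod_cast g_le d T
    have he2 : (2:ℝ) ≤ Real.exp 1 := by
      have := Real.exp_one_gt_d9
      norm_num at this ⊢
      linarith
    have h2 : ((T:ℝ)+1) ≤ Real.exp 1 * T := by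
      have hT' : (1:ℝ) ≤ T := by exact_mod_cast hT
      nlinarith
    have h3 : (g d T : ℝ) ≤ (Real.exp 1 * T) ^ d :=
      h1.trans (pow_le_pow_left₀ (by positivity) h2 d)
    calc Real.log (g d T) ≤ Real.log ((Real.exp 1 * T) ^ d) := by
          refine Real.log_le_log ?_ h3
          exact_mod_cast g_pos d T
      _ = d * Real.log (Real.exp 1 * T) := by rw [Real.log_pow]
  refine Real.iSup_le (fun z => ?_) (Real.sqrt_nonneg _)
  obtain ⟨V, hV⟩ := cover_exists T d F z hNS
  exact tree_bound (g_pos d T) F hT z V hV L hL1 hlogN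

end SR

theorem seqRad_bound {Z : Type*} (F : Set (Z → Bool)) (d T : ℕ)
    (hd : Ldim F = (d : ℕ∞)) (hd1 : 1 ≤ d) (hT : 1 ≤ T) :
    seqRad F T ≤ 12 * Real.sqrt (d * Real.log (Real.exp 1 * T)) / Real.sqrt T ∧
    (T : ℝ) * seqRad F T ≤ 12 * Real.sqrt (d * T * (Real.log T + 1)) := by
  have hTpos : (0:ℝ) < T := by exact_mod_cast hT
  -- F is nonempty
  have hF : F.Nonempty := by
    by_contra h
    rw [Set.not_nonempty_iff_eq_empty] at h
    have hempty : {n : ℕ | ∃ tr : BTree Z n, LShattered F n tr} = ∅ := by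
      ext n
      simp only [Set.mem_setOf_eq, Set.mem_empty_iff_false, iff_false, not_exists]
      intro tr hsh
      obtain ⟨f, hf, -⟩ := hsh (fun _ => true)
      rw [h] at hf
      exact hf
    rw [Ldim, hempty, Set.image_empty, sSup_empty] at hd
    rw [show (⊥ : ℕ∞) = ((0:ℕ) : ℕ∞) from rfl] at hd
    have : d = 0 := by exact_mod_cast hd.symm
    omega
  -- F has no shattered tree of depth d+1
  have hNS : SR.NoShatter F (d+1) := by
    intro tr hsh
    have hmem : ((d+1 : ℕ) : ℕ∞) ∈
        ((fun n : ℕ => (n : ℕ∞)) '' {n | ∃ tr : BTree Z n, LShattered F n tr}) :=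
      ⟨d+1, ⟨tr, hsh⟩, rfl⟩
    have := le_sSup hmem
    rw [← Ldim, hd] at this
    have hle : d + 1 ≤ d := by exact_mod_cast this
    omega
  set L : ℝ := d * Real.log (Real.exp 1 * T) with hLdef
  have hlogeT : Real.log (Real.exp 1 * T) = 1 + Real.log T := by
    rw [Real.log_mul (Real.exp_ne_zero 1) (by positivity), Real.log_exp]
  have hlogT : 0 ≤ Real.log T := Real.log_nonneg (by exact_mod_cast hT)
  have hLnonneg : 0 ≤ L := by
    rw [hLdef, hlogeT]
    positivity
  rw [seqRad]
  have hmain := SR.seqRad_le (T := T) hF hNS hd1 hT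
  have hsqrt2 : Real.sqrt 2 ≤ 12 := by
    have h4 : Real.sqrt 2 ≤ Real.sqrt 4 := Real.sqrt_le_sqrt (by norm_num)
    have : Real.sqrt 4 = 2 := by
      rw [show (4:ℝ) = 2^2 by norm_num, Real.sqrt_sq (by norm_num : (0:ℝ) ≤ 2)]
    linarith
  have hsplit : Real.sqrt (2 * L / T) = Real.sqrt 2 * Real.sqrt L / Real.sqrt T := by
    rw [Real.sqrt_div (by positivity : (0:ℝ) ≤ 2 * L),
      Real.sqrt_mul (by norm_num : (0:ℝ) ≤ 2)]
  have hpart1 : seqRad F T ≤ 12 * Real.sqrt L / Real.sqrt T := by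
    refine hmain.trans ?_
    rw [hsplit]
    have h1 : Real.sqrt 2 * Real.sqrt L ≤ 12 * Real.sqrt L :=
      mul_le_mul_of_nonneg_right hsqrt2 (Real.sqrt_nonneg _)
    exact div_le_div_of_nonneg_right h1 (Real.sqrt_pos.mpr hTpos).le
  refine ⟨hpart1, ?_⟩
  have hTsqrt : (T:ℝ) / Real.sqrt T = Real.sqrt T := Real.div_sqrt
  have heq : (T:ℝ) * (12 * Real.sqrt L / Real.sqrt T) = 12 * Real.sqrt (d * T * (Real.log T + 1)) := by
    have hTL : (T:ℝ) * L = (d:ℝ) * T * (Real.log T + 1) := by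
      rw [hLdef, hlogeT]; ring
    calc (T:ℝ) * (12 * Real.sqrt L / Real.sqrt T)
        = 12 * (((T:ℝ) / Real.sqrt T) * Real.sqrt L) := by ring
      _ = 12 * (Real.sqrt T * Real.sqrt L) := by rw [hTsqrt]
      _ = 12 * Real.sqrt ((T:ℝ) * L) := by rw [Real.sqrt_mul (le_of_lt hTpos)]
      _ = 12 * Real.sqrt (d * T * (Real.log T + 1)) := by rw [hTL]
  calc (T:ℝ) * seqRad F T ≤ (T:ℝ) * (12 * Real.sqrt L / Real.sqrt T) :=
        mul_le_mul_of_nonneg_left hpart1 (le_of_lt hTpos)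
    _ = 12 * Real.sqrt (d * T * (Real.log T + 1)) := heq
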